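/- For any x ∈ F_{q^d}^×, the reduced norm of the element 1 − x^{1−q}τ in the division algebra F_{q^d}(τ) over F_q(t) equals 1 − t, where t = τ^d. -/

import Mathlib

open Polynomial Finset

lemma det_aux {R : Type*} [CommRing R] (n : ℕ) (c : ℕ → R) (e t : R) :
    (Matrix.of fun i j : Fin (n+1) =>
        (if j = i then (1:R) else 0) +
        (if (j:ℕ) = (i:ℕ) + 1 then -c (i:ℕ) else 0) +
        (if (i:ℕ) = n ∧ (j:ℕ) = 0 then -(t * e) else 0)).det
      = 1 - t * (e * ∏ i ∈ Finset.range n, c i) := by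
  induction n with
  | zero =>
      simp [Matrix.det_fin_one]
      ring
  | succ m _ =>
      set A := (Matrix.of fun i j : Fin (m+2) =>
        (if j = i then (1:R) else 0) +
        (if (j:ℕ) = (i:ℕ) + 1 then -c (i:ℕ) else 0) +
        (if (i:ℕ) = m+1 ∧ (j:ℕ) = 0 then -(t * e) else 0)) with hA
      rw [Matrix.det_succ_column_zero]
      have hz : ∀ i : Fin (m+2), i ∉ ({0, Fin.last (m+1)} : Finset (Fin (m+2))) →
          (-1:R) ^ (i:ℕ) * A i 0 * (A.submatrix i.succAbove Fin.succ).det = 0 := by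
        intro i hi
        simp only [Finset.mem_insert, Finset.mem_singleton, not_or] at hi
        have hv0 : (i:ℕ) ≠ 0 := fun h => hi.1 (Fin.ext (by simpa using h))
        have hvl : (i:ℕ) ≠ m+1 := fun h => hi.2 (Fin.ext (by simpa using h))
        have : A i 0 = 0 := by
          simp only [hA, Matrix.of_apply, Fin.ext_iff, Fin.val_zero]
          simp [Ne.symm hv0, show (0:ℕ) ≠ (i:ℕ) + 1 by omega, hvl]
        rw [this]; ring
      rw [← Finset.sum_subset (Finset.subset_univ {0, Fin.last (m+1)})
        (fun i _ hi => hz i hi)]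
      have hne : (0 : Fin (m+2)) ≠ Fin.last (m+1) := by
        simp [Fin.ext_iff]
      rw [Finset.sum_pair hne]
      have hA00 : A 0 0 = 1 := by
        simp only [hA, Matrix.of_apply, Fin.ext_iff, Fin.val_zero]
        simp
      have hAl0 : A (Fin.last (m+1)) 0 = -(t * e) := by
        simp only [hA, Matrix.of_apply, Fin.ext_iff, Fin.val_zero, Fin.val_last]
        simp [show (0:ℕ) ≠ m + 1 by omega, show (0:ℕ) ≠ m + 1 + 1 by omega]
      -- minor at row 0 : upper triangular with 1's on diagonal
      have hM0 : (A.submatrix (Fin.succAbove 0) Fin.succ).det = 1 := by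
        rw [Matrix.det_of_upperTriangular]
        · apply Finset.prod_eq_one
          intro i _
          simp only [Matrix.submatrix_apply, hA, Matrix.of_apply, Fin.succAbove_zero,
            Fin.ext_iff, Fin.val_succ]
          rw [if_pos trivial, if_neg (by omega), if_neg (by omega)]
          ring
        · intro i j hij
          simp only [id] at hij
          have hij' : (j:ℕ) < (i:ℕ) := hij
          simp only [Matrix.submatrix_apply, hA, Matrix.of_apply, Fin.succAbove_zero,
            Fin.ext_iff, Fin.val_succ]
          rw [if_neg (by omega), if_neg (by omega), if_neg (by omega)]
          ring
      -- minor at last row : lower triangular with -c i on diagonal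
      have hMl : (A.submatrix (Fin.last (m+1)).succAbove Fin.succ).det
          = ∏ i ∈ Finset.range (m+1), -c i := by
        rw [Matrix.det_of_lowerTriangular]
        · rw [← Fin.prod_univ_eq_prod_range]
          apply Finset.prod_congr rfl
          intro i _
          simp only [Matrix.submatrix_apply, hA, Matrix.of_apply, Fin.succAbove_last,
            Fin.ext_iff, Fin.val_succ, Fin.coe_castSucc]
          have hi : (i:ℕ) < m+1 := i.isLt
          rw [if_neg (by omega), if_pos trivial, if_neg (by omega)]
          ring
        · intro i j hij
          have hij' : (i:ℕ) < (j:ℕ) := hij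
          have hi : (i:ℕ) < m+1 := i.isLt
          simp only [Matrix.submatrix_apply, hA, Matrix.of_apply, Fin.succAbove_last,
            Fin.ext_iff, Fin.val_succ, Fin.coe_castSucc]
          rw [if_neg (by omega), if_neg (by omega), if_neg (by omega)]
          ring
      rw [hA00, hAl0, hM0, hMl]
      have hprod : ∏ i ∈ Finset.range (m+1), -c i
          = (-1:R)^(m+1) * ∏ i ∈ Finset.range (m+1), c i := by
        calc ∏ i ∈ range (m+1), -c i = ∏ i ∈ range (m+1), (-1) * c i := by
              simp [neg_one_mul]
          _ = (∏ _i ∈ range (m+1), (-1:R)) * ∏ i ∈ range (m+1), c i :=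
              Finset.prod_mul_distrib
          _ = (-1:R)^(m+1) * ∏ i ∈ range (m+1), c i := by
              rw [Finset.prod_const, Finset.card_range]
      rw [hprod]
      simp only [Fin.val_last, Fin.val_zero, pow_zero]
      have hsq : ((-1:R) ^ (m+1)) * ((-1:R) ^ (m+1)) = 1 := by
        rw [← pow_add]
        exact Even.neg_one_pow ⟨m+1, by ring⟩
      calc (1:R) * 1 * 1 + (-1:R)^(m+1) * -(t*e) * ((-1:R)^(m+1) * ∏ i ∈ range (m+1), c i)
          = 1 - ((-1:R)^(m+1) * (-1:R)^(m+1)) * (t * (e * ∏ i ∈ range (m+1), c i)) := by ring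
        _ = 1 - t * (e * ∏ i ∈ range (m+1), c i) := by rw [hsq]; ring

lemma zpow_prod_aux {G : Type*} [Field G] (x : G) (hx : x ≠ 0)
    (f : ℕ → ℤ) (n : ℕ) :
    ∏ i ∈ Finset.range n, x ^ f i = x ^ ∑ i ∈ Finset.range n, f i := by
  induction n with
  | zero => simp
  | succ k ih =>
      rw [Finset.prod_range_succ, Finset.sum_range_succ, ih, ← zpow_add₀ hx]

/-- For `x ∈ F_{q^d}^×`, the reduced norm of `1 − x^{1−q} τ` in the division
algebra `F_{q^d}(τ)` over `F_q(t)` equals `1 − t`.  Following the paper, the reduced norm is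
computed as the determinant of the left-multiplication matrix in the basis `1, τ, …, τ^{d-1}`:
the `d × d` matrix with `1` on the diagonal, `−x^{q^i − q^{i+1}}` just above the diagonal, and
`−t·x^{q^{d-1} − q^d}` in the lower-left corner.  We state the resulting determinant identity
over `F_{q^d}[t]` (with `t = X`). -/
theorem reduced_norm_one_sub_pow_tau
    (Fq Fqd : Type) [Field Fq] [Fintype Fq] [Field Fqd] [Fintype Fqd] [Algebra Fq Fqd]
    (q d : ℕ) (hq : q = Fintype.card Fq) (hd : 0 < d) (hqd : Fintype.card Fqd = q ^ d)
    (x : Fqd) (hx : x ≠ 0) :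
    (Matrix.of fun i j : Fin d =>
        (if j = i then (1 : Polynomial Fqd) else 0) +
        (if (j : ℕ) = (i : ℕ) + 1 then
            -Polynomial.C (x ^ ((q : ℤ) ^ (i : ℕ) - (q : ℤ) ^ ((i : ℕ) + 1))) else 0) +
        (if (i : ℕ) = d - 1 ∧ (j : ℕ) = 0 then
            -Polynomial.X * Polynomial.C (x ^ ((q : ℤ) ^ (d - 1) - (q : ℤ) ^ d)) else 0)).det =
      1 - Polynomial.X := by
  obtain ⟨n, rfl⟩ : ∃ n, d = n + 1 := ⟨d - 1, by omega⟩
  have key := det_aux (R := Polynomial Fqd) n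
    (fun i => Polynomial.C (x ^ ((q : ℤ) ^ i - (q : ℤ) ^ (i + 1))))
    (Polynomial.C (x ^ ((q : ℤ) ^ n - (q : ℤ) ^ (n + 1)))) Polynomial.X
  have hmat : (Matrix.of fun i j : Fin (n+1) =>
        (if j = i then (1 : Polynomial Fqd) else 0) +
        (if (j : ℕ) = (i : ℕ) + 1 then
            -Polynomial.C (x ^ ((q : ℤ) ^ (i : ℕ) - (q : ℤ) ^ ((i : ℕ) + 1))) else 0) +
        (if (i : ℕ) = n + 1 - 1 ∧ (j : ℕ) = 0 then
            -Polynomial.X * Polynomial.C (x ^ ((q : ℤ) ^ (n + 1 - 1) - (q : ℤ) ^ (n + 1))) else 0))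
      = (Matrix.of fun i j : Fin (n+1) =>
        (if j = i then (1 : Polynomial Fqd) else 0) +
        (if (j : ℕ) = (i : ℕ) + 1 then
            -Polynomial.C (x ^ ((q : ℤ) ^ (i:ℕ) - (q : ℤ) ^ ((i:ℕ) + 1))) else 0) +
        (if (i : ℕ) = n ∧ (j : ℕ) = 0 then
            -(Polynomial.X * Polynomial.C (x ^ ((q : ℤ) ^ n - (q : ℤ) ^ (n + 1)))) else 0)) := by
    funext i j
    simp only [Matrix.of_apply, Nat.add_sub_cancel, neg_mul]
  rw [hmat, key]
  have hcard1 : 1 ≤ q ^ (n + 1) := by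
    rw [← hqd]; exact Fintype.card_pos
  have hxpow : x ^ (Fintype.card Fqd - 1) = 1 := FiniteField.pow_card_sub_one_eq_one x hx
  have hprod : (Polynomial.C (x ^ ((q : ℤ) ^ n - (q : ℤ) ^ (n + 1))) *
      ∏ i ∈ Finset.range n, Polynomial.C (x ^ ((q : ℤ) ^ i - (q : ℤ) ^ (i + 1))))
      = 1 := by
    rw [← map_prod, ← map_mul]
    rw [zpow_prod_aux x hx, Finset.sum_range_sub' (fun i => (q:ℤ) ^ i), ← zpow_add₀ hx]
    have hexp : (q : ℤ) ^ n - (q : ℤ) ^ (n + 1) + ((q:ℤ) ^ 0 - (q:ℤ) ^ n)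
        = -(((q ^ (n+1) - 1 : ℕ) : ℤ)) := by
      push_cast [hcard1]
      ring
    rw [hexp, zpow_neg, zpow_natCast, ← hqd, hxpow, inv_one, map_one]
  rw [hprod, mul_one]
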